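/- arXiv:2102.02777 — 5 statements merged into one kernel-verified Lean document; each statement's English description precedes it below -/
import Mathlib

section
/- For every natural number n, the string γ(n) produced by the standard RPF natural spelling function is a Dyck word (a balanced string of parentheses). -/
/-- A Dyck word over {(,)}, encoded as `List Bool` with `true` = '(' and `false` = ')'. -/
def IsDyck (w : List Bool) : Prop :=
  (∀ k, (w.take k).count false ≤ (w.take k).count true) ∧
    w.count true = w.count false

/-- The standard RPF natural spelling function.  `true` = '(' and `false` = ')'.
For `n ≥ 2`, `γ n` is the concatenation over `i = 0, …, m-1` of `"(" ++ γ aᵢ ++ ")"`,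
where `aᵢ` is the exponent of the `i`-th prime (`Nat.nth Nat.Prime i`, 0-indexed, so the
0th prime is 2) in the factorization of `n`, and the `(m-1)`-st prime is the greatest
prime factor of `n` (so `m = Nat.count Nat.Prime (gpf n) + 1`). -/
noncomputable def gamma : ℕ → List Bool
  | 0 => []
  | 1 => [true, false]
  | (n+2) =>
    ((List.range (Nat.count Nat.Prime ((n+2).factorization.support.sup id) + 1)).map
      (fun i => (true :: gamma ((n+2).factorization (Nat.nth Nat.Prime i))) ++ [false])).flatten
termination_by n => n
decreasing_by exact Nat.factorization_lt _ (by omega)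

lemma isDyck_nil : IsDyck [] := ⟨fun k => by simp, by simp⟩

lemma isDyck_prefix_le (w : List Bool) (h : IsDyck w) (k : ℕ) :
    (w.take k).count false ≤ (w.take k).count true := h.1 k

lemma isDyck_append {u v : List Bool} (hu : IsDyck u) (hv : IsDyck v) : IsDyck (u ++ v) := by
  constructor
  · intro k
    rw [List.take_append, List.count_append, List.count_append]
    exact Nat.add_le_add (hu.1 k) (hv.1 _)
  · rw [List.count_append, List.count_append, hu.2, hv.2]

lemma isDyck_nest {w : List Bool} (hw : IsDyck w) : IsDyck (true :: w ++ [false]) := by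
  constructor
  · intro k
    match k with
    | 0 => simp
    | j + 1 =>
      have key : ((w ++ [false]).take j).count false ≤ ((w ++ [false]).take j).count true + 1 := by
        rw [List.take_append, List.count_append, List.count_append]
        have h1 : ((([false] : List Bool).take (j - w.length)).count false) ≤ 1 := by
          calc ((([false] : List Bool).take (j - w.length)).count false)
              ≤ (([false] : List Bool).take (j - w.length)).length := List.count_le_length
            _ ≤ 1 := by rw [List.length_take]; exact min_le_right _ _
        have h2 : ((([false] : List Bool).take (j - w.length)).count true) = 0 := by
          rcases Nat.eq_zero_or_pos (j - w.length) with h | h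
          · simp [h]
          · rw [List.take_of_length_le (by simp only [List.length_singleton]; omega)]
            simp
        have h3 := hw.1 j
        omega
      simp only [List.cons_append, List.take_succ_cons, List.count_cons]
      simp
      omega
  · simp only [List.cons_append, List.count_cons, List.count_append]
    simp [hw.2]

lemma isDyck_flatten (L : List (List Bool)) (h : ∀ w ∈ L, IsDyck w) : IsDyck L.flatten := by
  induction L with
  | nil => simpa using isDyck_nil
  | cons a t ih =>
    rw [List.flatten_cons]
    exact isDyck_append (h a (by simp)) (ih fun w hw => h w (by simp [hw]))

/-- For every natural number `n`, `γ n` is a Dyck word. -/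
theorem gamma_isDyck : ∀ n : ℕ, IsDyck (gamma n) := by
  intro n
  induction n using Nat.strong_induction_on with
  | _ n ih =>
    match n with
    | 0 => rw [gamma]; exact isDyck_nil
    | 1 =>
      rw [gamma]
      constructor
      · intro k
        match k with
        | 0 => simp
        | 1 => simp
        | j + 2 =>
          rw [List.take_of_length_le (by simp)]
          simp
      · simp
    | (m+2) =>
      rw [gamma]
      apply isDyck_flatten
      intro w hw
      simp only [List.mem_map, List.mem_range] at hw
      obtain ⟨i, _, rfl⟩ := hw
      exact isDyck_nest (ih _ (Nat.lt_of_lt_of_le (Nat.factorization_lt _ (by omega)) (le_refl _)))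
end

section
/- The standard RPF natural spelling function γ : ℕ → Σ* is injective. -/
/-- balanced bracket sequence -/
def Bal (w : List Bool) : Prop :=
  w.count true = w.count false ∧ ∀ p, p <+: w → p.count false ≤ p.count true

lemma bal_nil : Bal [] := ⟨rfl, by rintro p ⟨t, ht⟩; simp_all⟩

lemma prefix_append_cases {p u v : List Bool} (h : p <+: u ++ v) :
    p <+: u ∨ ∃ q, p = u ++ q ∧ q <+: v := by
  rcases h with ⟨t, ht⟩
  rcases List.append_eq_append_iff.mp ht with ⟨a', ha1, ha2⟩ | ⟨c', hc1, hc2⟩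
  · exact Or.inl ⟨a', ha1.symm⟩
  · exact Or.inr ⟨c', hc1, ⟨t, hc2.symm⟩⟩

lemma bal_block {w : List Bool} (h : Bal w) : Bal ((true :: w) ++ [false]) := by
  constructor
  · simp [h.1]
  · rintro p hp
    rcases p with _ | ⟨b, q⟩
    · simp
    · rcases hp with ⟨t, ht⟩
      simp only [List.cons_append, List.cons.injEq] at ht
      obtain ⟨rfl, ht⟩ := ht
      have hq : q <+: w ++ [false] := ⟨t, ht⟩
      rcases prefix_append_cases hq with h1 | ⟨r, rfl, hr⟩
      · have := h.2 q h1; simp; omega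
      · have hc := h.1
        rcases hr with ⟨s, hs⟩
        rcases r with _ | ⟨x, r⟩
        · simp [hc]
        · simp only [List.cons_append, List.cons.injEq] at hs
          obtain ⟨rfl, hs⟩ := hs
          have hr0 : r = [] := by
            have hlen := congrArg List.length hs
            simp only [List.length_append, List.length_nil] at hlen
            exact List.eq_nil_of_length_eq_zero (by omega)
          subst hr0
          simp [hc]

lemma bal_append {u v : List Bool} (hu : Bal u) (hv : Bal v) : Bal (u ++ v) := by
  constructor
  · simp [hu.1, hv.1]
  · intro p hp
    rcases prefix_append_cases hp with h1 | ⟨q, rfl, hq⟩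
    · exact hu.2 p h1
    · have := hv.2 q hq
      simp [hu.1]; omega

lemma bal_flatten {L : List (List Bool)} (h : ∀ w ∈ L, Bal w) : Bal L.flatten := by
  induction L with
  | nil => exact bal_nil
  | cons a t ih =>
    rw [List.flatten_cons]
    exact bal_append (h a (by simp)) (ih (fun w hw => h w (by simp [hw])))

lemma gamma_eq (n : ℕ) : gamma (n+2) =
    ((List.range (Nat.count Nat.Prime ((n+2).factorization.support.sup id) + 1)).map
      (fun i => (true :: gamma ((n+2).factorization (Nat.nth Nat.Prime i))) ++ [false])).flatten := by
  rw [gamma]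

lemma gamma_zero : gamma 0 = [] := by rw [gamma]
lemma gamma_one : gamma 1 = [true, false] := by rw [gamma]

lemma bal_gamma : ∀ n, Bal (gamma n) := by
  intro n
  induction n using Nat.strong_induction_on with
  | _ n ih =>
    match n with
    | 0 => exact gamma_zero ▸ bal_nil
    | 1 => exact gamma_one ▸ bal_block bal_nil
    | (n+2) =>
      rw [gamma_eq]
      apply bal_flatten
      intro w hw
      simp only [List.mem_map, List.mem_range] at hw
      obtain ⟨i, _, rfl⟩ := hw
      exact bal_block (ih _ (Nat.factorization_lt _ (by omega)))

/-- uniqueness of top-level block decomposition -/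
lemma blocks_inj : ∀ (L L' : List (List Bool)), (∀ w ∈ L, Bal w) → (∀ w ∈ L', Bal w) →
    (L.map (fun w => (true :: w) ++ [false])).flatten =
    (L'.map (fun w => (true :: w) ++ [false])).flatten → L = L' := by
  intro L
  induction L with
  | nil =>
    intro L' _ _ h
    cases L' with
    | nil => rfl
    | cons a t => simp at h
  | cons a t ih =>
    intro L' hL hL' h
    cases L' with
    | nil => simp at h
    | cons a' t' =>
      simp only [List.map_cons, List.flatten_cons, List.cons_append, List.append_assoc,
        List.cons.injEq] at h
      -- h : a ++ [false] ++ flatten ... = a' ++ [false] ++ flatten ...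
      have ha : a = a' := by
        have hba := hL a (by simp)
        have hba' := hL' a' (by simp)
        have h2 : a ++ (false :: (t.map (fun w => (true :: w) ++ [false])).flatten)
            = a' ++ (false :: (t'.map (fun w => (true :: w) ++ [false])).flatten) := by
          simpa using h
        rcases List.append_eq_append_iff.mp h2 with ⟨c, hc1, hc2⟩ | ⟨c, hc1, hc2⟩
        · rcases c with _ | ⟨x, c⟩
          · simpa using hc1.symm
          · simp only [List.cons_append, List.cons.injEq] at hc2
            obtain ⟨rfl, -⟩ := hc2
            exfalso
            have hpre : a ++ [false] <+: a' := by
              rw [hc1]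
              have : a ++ false :: c = (a ++ [false]) ++ c := by simp
              exact this ▸ ⟨c, rfl⟩
            have := hba'.2 _ hpre
            simp [hba.1] at this
        · rcases c with _ | ⟨x, c⟩
          · simpa using hc1
          · simp only [List.cons_append, List.cons.injEq] at hc2
            obtain ⟨rfl, -⟩ := hc2
            exfalso
            have hpre : a' ++ [false] <+: a := by
              rw [hc1]
              have : a' ++ false :: c = (a' ++ [false]) ++ c := by simp
              exact this ▸ ⟨c, rfl⟩
            have := hba.2 _ hpre
            simp [hba'.1] at this
      subst ha
      have h3 : (t.map (fun w => (true :: w) ++ [false])).flatten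
          = (t'.map (fun w => (true :: w) ++ [false])).flatten := by
        have h2 : a ++ (false :: (t.map (fun w => (true :: w) ++ [false])).flatten)
            = a ++ (false :: (t'.map (fun w => (true :: w) ++ [false])).flatten) := by
          simpa using h
        simpa using h2
      rw [ih t' (fun w hw => hL w (by simp [hw])) (fun w hw => hL' w (by simp [hw])) h3]



lemma gamma_eq' (n : ℕ) : gamma (n+2) =
    (((List.range (Nat.count Nat.Prime ((n+2).factorization.support.sup id) + 1)).map
      (fun i => gamma ((n+2).factorization (Nat.nth Nat.Prime i)))).map
      (fun w => (true :: w) ++ [false])).flatten := by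
  rw [gamma_eq, List.map_map]; rfl

lemma gamma_ne_nil {n : ℕ} (hn : n ≠ 0) : gamma n ≠ [] := by
  match n with
  | 1 => rw [gamma_one]; simp
  | (n+2) =>
    rw [gamma_eq]
    intro h
    have h0 := List.flatten_eq_nil_iff.mp h
      ((true :: gamma ((n+2).factorization (Nat.nth Nat.Prime 0))) ++ [false])
      (List.mem_map.mpr ⟨0, List.mem_range.mpr (by omega), rfl⟩)
    simp at h0

lemma gpf_mem {n : ℕ} (hn : 2 ≤ n) : n.factorization.support.sup id ∈ n.factorization.support := by
  have hne : n.factorization.support.Nonempty := by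
    rw [Nat.support_factorization]
    exact Nat.nonempty_primeFactors.mpr (by omega)
  obtain ⟨i, hi, heq⟩ := Finset.exists_mem_eq_sup _ hne id
  rw [heq]; exact hi

lemma gpf_prime {n : ℕ} (hn : 2 ≤ n) : (n.factorization.support.sup id).Prime := by
  have := gpf_mem hn
  rw [Nat.support_factorization, Nat.mem_primeFactors] at this
  exact this.1

lemma gamma_inj_aux : ∀ n n', gamma n = gamma n' → n = n' := by
  intro n
  induction n using Nat.strong_induction_on with
  | _ n ih =>
  intro n' h
  match n, n' with
  | 0, 0 => rfl
  | 0, 1 => rw [gamma_zero, gamma_one] at h; simp at h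
  | 0, (b+2) => exact absurd (gamma_zero ▸ h).symm (gamma_ne_nil (by omega))
  | 1, 0 => rw [gamma_zero, gamma_one] at h; simp at h
  | (a+2), 0 => exact absurd (gamma_zero ▸ h) (gamma_ne_nil (by omega))
  | 1, 1 => rfl
  | 1, (b+2) =>
    exfalso
    have h1 : gamma 1 = ((([[]] : List (List Bool)).map (fun w => (true :: w) ++ [false])).flatten) := by
      rw [gamma_one]; simp
    rw [h1, gamma_eq' b] at h
    have hL := blocks_inj _ _ (by rintro w hw; simp at hw; subst hw; exact bal_nil)
      (by rintro w hw; simp only [List.mem_map] at hw; obtain ⟨i, -, rfl⟩ := hw; exact bal_gamma _) h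
    set g := ((b:ℕ)+2).factorization.support.sup id with hg
    have hlen := congrArg List.length hL
    simp at hlen
    -- hlen : count Prime g = 0
    rw [hlen] at hL
    simp [List.range_succ] at hL
    have hE0 : (b+2).factorization 2 = 0 := by
      by_contra hne
      exact gamma_ne_nil hne hL
    have hgp : (2:ℕ) = g := by
      have := Nat.nth_count (p := Nat.Prime) (gpf_prime (n := b+2) (by omega))
      rw [← hg] at this
      rw [hlen] at this
      simpa using this
    have hmem2 := gpf_mem (n := b+2) (by omega)
    rw [Finsupp.mem_support_iff] at hmem2
    rw [← hg, ← hgp] at hmem2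
    exact hmem2 hE0
  | (b+2), 1 =>
    exfalso
    have h1 : gamma 1 = ((([[]] : List (List Bool)).map (fun w => (true :: w) ++ [false])).flatten) := by
      rw [gamma_one]; simp
    rw [h1, gamma_eq' b] at h
    have hL := blocks_inj _ _
      (by rintro w hw; simp only [List.mem_map] at hw; obtain ⟨i, -, rfl⟩ := hw; exact bal_gamma _)
      (by rintro w hw; simp at hw; subst hw; exact bal_nil) h
    set g := ((b:ℕ)+2).factorization.support.sup id with hg
    have hlen := congrArg List.length hL
    simp at hlen
    rw [hlen] at hL
    simp [List.range_succ] at hL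
    have hE0 : (b+2).factorization 2 = 0 := by
      by_contra hne
      exact gamma_ne_nil hne hL
    have hgp : (2:ℕ) = g := by
      have := Nat.nth_count (p := Nat.Prime) (gpf_prime (n := b+2) (by omega))
      rw [← hg] at this
      rw [hlen] at this
      simpa using this
    have hmem2 := gpf_mem (n := b+2) (by omega)
    rw [Finsupp.mem_support_iff] at hmem2
    rw [← hg, ← hgp] at hmem2
    exact hmem2 hE0
  | (a+2), (b+2) =>
    rw [gamma_eq' a, gamma_eq' b] at h
    have hL := blocks_inj _ _
      (by rintro w hw; simp only [List.mem_map] at hw; obtain ⟨i, -, rfl⟩ := hw; exact bal_gamma _)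
      (by rintro w hw; simp only [List.mem_map] at hw; obtain ⟨i, -, rfl⟩ := hw; exact bal_gamma _) h
    set ga := ((a:ℕ)+2).factorization.support.sup id with hga
    set gb := ((b:ℕ)+2).factorization.support.sup id with hgb
    have hlen := congrArg List.length hL
    simp at hlen
    -- hlen : count Prime ga = count Prime gb
    have hgab : ga = gb := by
      have h1 := Nat.nth_count (p := Nat.Prime) (gpf_prime (n := a+2) (by omega))
      have h2 := Nat.nth_count (p := Nat.Prime) (gpf_prime (n := b+2) (by omega))
      rw [← hga] at h1; rw [← hgb] at h2
      rw [← h1, ← h2, hlen]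
    rw [← hgab] at hL
    have hE : ∀ i ∈ List.range (Nat.count Nat.Prime ga + 1),
        (a+2).factorization (Nat.nth Nat.Prime i) = (b+2).factorization (Nat.nth Nat.Prime i) := by
      intro i hi
      have := List.map_eq_map_iff.mp hL i hi
      exact ih _ (Nat.factorization_lt _ (by omega)) _ this
    have hfact : (a+2).factorization = (b+2).factorization := by
      ext p
      by_cases hp : p.Prime
      · by_cases hle : p ≤ ga
        · have hip : Nat.count Nat.Prime p ≤ Nat.count Nat.Prime ga := Nat.count_monotone _ hle
          have := hE (Nat.count Nat.Prime p) (List.mem_range.mpr (by omega))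
          rwa [Nat.nth_count hp] at this
        · push_neg at hle
          have hna : (a+2).factorization p = 0 := by
            rw [← Finsupp.notMem_support_iff]
            intro hmem
            exact absurd (Finset.le_sup (f := id) hmem) (by simp only [id]; rw [← hga]; exact hle.not_ge)
          have hnb : (b+2).factorization p = 0 := by
            rw [← Finsupp.notMem_support_iff]
            intro hmem
            exact absurd (Finset.le_sup (f := id) hmem)
              (by simp only [id]; rw [← hgb, ← hgab]; exact hle.not_ge)
          rw [hna, hnb]
      · rw [Nat.factorization_eq_zero_of_not_prime _ hp, Nat.factorization_eq_zero_of_not_prime _ hp]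
    have := Nat.factorization_inj (by simp : (a+2:ℕ) ∈ {x : ℕ | x ≠ 0})
      (by simp : (b+2:ℕ) ∈ {x : ℕ | x ≠ 0}) hfact
    omega


/-- The standard RPF natural spelling function is injective. -/
theorem gamma_injective : Function.Injective gamma := by
  exact fun a b => gamma_inj_aux a b
end

section
/- The standard RPF natural evaluation function α : 𝒟 → ℕ is surjective. -/
/-- Length of the first chunk of `w` (smallest positive `k` such that the first `k`
symbols are balanced); `0` if no such `k` exists. -/
noncomputable def firstChunkLen (w : List Bool) : ℕ :=
  sInf {k | 0 < k ∧ (w.take k).count true = (w.take k).count false}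

/-- Auxiliary evaluator: `alphaAux i w` is `∏ⱼ p_{i+j} ^ α(dⱼ)` over the chunks
`(d₀)(d₁)…` of `w`, where `α(ε) = 0`. -/
noncomputable def alphaAux (i : ℕ) (w : List Bool) : ℕ :=
  if w = [] then 1
  else if 0 < firstChunkLen w then
    (Nat.nth Nat.Prime i) ^
        (if ((w.take (firstChunkLen w)).drop 1).dropLast = [] then 0
         else alphaAux 0 (((w.take (firstChunkLen w)).drop 1).dropLast))
      * alphaAux (i+1) (w.drop (firstChunkLen w))
  else 1
termination_by w.length
decreasing_by
  · simp only [List.length_dropLast, List.length_drop, List.length_take]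
    rename_i hw _; cases w <;> simp_all <;> omega
  · simp only [List.length_drop]
    rename_i hw hc; cases w <;> simp_all <;> omega

/-- The standard RPF natural evaluation function `α : 𝒟 → ℕ`:
`α ε = 0` and `α w = ∏ᵢ pᵢ ^ α(dᵢ)` over the chunks `(dᵢ)` of `w`. -/
noncomputable def alpha (w : List Bool) : ℕ := if w = [] then 0 else alphaAux 0 w


def chunk (d : List Bool) : List Bool := true :: (d ++ [false])

lemma chunk_length (d : List Bool) : (chunk d).length = d.length + 2 := by
  simp [chunk]

lemma take_chunk_append_small (d rest : List Bool) {k : ℕ} (h1 : 1 ≤ k) (h2 : k ≤ d.length + 1) :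
    ((chunk d ++ rest).take k) = true :: d.take (k-1) := by
  obtain ⟨m, rfl⟩ : ∃ m, k = m + 1 := ⟨k-1, by omega⟩
  simp only [chunk, List.cons_append, List.take_succ_cons, List.append_assoc]
  rw [List.take_append]
  have : m - d.length = 0 := by omega
  simp [this]

lemma firstChunkLen_chunk_append (d rest : List Bool) (hd : IsDyck d) :
    firstChunkLen (chunk d ++ rest) = d.length + 2 := by
  set w := chunk d ++ rest with hw
  have hmem : d.length + 2 ∈ {k | 0 < k ∧ (w.take k).count true = (w.take k).count false} := by
    constructor
    · omega
    · rw [hw, List.take_left' (chunk_length d)]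
      simp [chunk, List.count_cons, List.count_append, hd.2]
  have hlb : ∀ k ∈ {k | 0 < k ∧ (w.take k).count true = (w.take k).count false},
      d.length + 2 ≤ k := by
    intro k hk
    by_contra hlt
    push_neg at hlt
    obtain ⟨hk1, hk2⟩ := hk
    rw [hw, take_chunk_append_small d rest hk1 (by omega)] at hk2
    have := hd.1 (k-1)
    simp [List.count_cons] at hk2
    omega
  exact le_antisymm (Nat.sInf_le hmem) (hlb _ (Nat.sInf_mem ⟨_, hmem⟩))

lemma isDyck_chunk_append {d rest : List Bool} (hd : IsDyck d) (hr : IsDyck rest) :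
    IsDyck (chunk d ++ rest) := by
  constructor
  · intro k
    rcases Nat.eq_zero_or_pos k with rfl | hk1
    · simp
    rcases le_or_gt k (d.length + 1) with hk2 | hk2
    · rw [take_chunk_append_small d rest hk1 hk2]
      have := hd.1 (k-1)
      simp [List.count_cons]
      omega
    · rw [List.take_append, List.take_of_length_le (by rw [chunk_length]; omega)]
      have := hr.1 (k - (chunk d).length)
      simp only [List.count_append, chunk, List.count_cons, List.count_append] at *
      have h2 := hd.2
      simp at *
      omega
  · have := hd.2; have := hr.2
    simp [chunk, List.count_append, List.count_cons]
    omega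

lemma alphaAux_chunk_append (i : ℕ) (d rest : List Bool) (hd : IsDyck d) :
    alphaAux i (chunk d ++ rest) =
      (Nat.nth Nat.Prime i) ^ alpha d * alphaAux (i+1) rest := by
  rw [alphaAux]
  have hne : chunk d ++ rest ≠ [] := by simp [chunk]
  have hf := firstChunkLen_chunk_append d rest hd
  rw [if_neg hne, if_pos (by omega)]
  rw [hf, List.take_left' (by rw [chunk_length]), List.drop_left' (by rw [chunk_length])]
  have hdrop : ((chunk d).drop 1).dropLast = d := by
    simp [chunk]
  rw [hdrop, alpha]

def W : List (List Bool) → List Bool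
  | [] => []
  | d :: L => chunk d ++ W L

lemma W_isDyck : ∀ L : List (List Bool), (∀ d ∈ L, IsDyck d) → IsDyck (W L)
  | [], _ => isDyck_nil
  | d :: L, h => isDyck_chunk_append (h d (by simp)) (W_isDyck L (fun x hx => h x (by simp [hx])))

lemma alphaAux_W (L : List (List Bool)) (h : ∀ d ∈ L, IsDyck d) : ∀ i,
    alphaAux i (W L) = ∏ j ∈ Finset.range L.length,
      (Nat.nth Nat.Prime (i+j)) ^ alpha (L.getD j []) := by
  induction L with
  | nil => intro i; rw [W, alphaAux]; simp
  | cons d L ih =>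
    intro i
    rw [W, alphaAux_chunk_append i d _ (h d (by simp)),
      ih (fun x hx => h x (by simp [hx])) (i+1)]
    rw [List.length_cons, Finset.prod_range_succ']
    simp only [List.getD_cons_zero, List.getD_cons_succ, add_zero]
    rw [mul_comm]
    congr 1
    apply Finset.prod_congr rfl
    intro j _
    congr 2
    omega

theorem prod_fact (n:ℕ)(h:n≠0) :
    ∏ j ∈ Finset.range (n+1), (Nat.nth Nat.Prime j)^(n.factorization (Nat.nth Nat.Prime j)) = n := by
  have hinj : Function.Injective (Nat.nth Nat.Prime) := Nat.nth_injective Nat.infinite_setOf_prime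
  rw [← Finset.prod_image (f := fun p => p ^ n.factorization p) (fun a _ b _ h => hinj h)]
  have : ∏ p ∈ Finset.image (Nat.nth Nat.Prime) (Finset.range (n+1)), p ^ n.factorization p
      = ∏ p ∈ n.primeFactors, p ^ n.factorization p := by
    symm
    apply Finset.prod_subset
    · intro p hp
      have hpp := Nat.prime_of_mem_primeFactors hp
      have hle := Nat.le_of_mem_primeFactors hp
      simp only [Finset.mem_image, Finset.mem_range]
      refine ⟨Nat.count Nat.Prime p, ?_, Nat.nth_count hpp⟩
      have : Nat.count Nat.Prime p ≤ p := by
        rw [Nat.count_eq_card_filter_range]; exact (Finset.card_filter_le _ _).trans (by simp)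
      omega
    · intro p _ hp
      have : n.factorization p = 0 := by
        rw [← Nat.support_factorization] at hp
        exact Finsupp.notMem_support_iff.mp hp
      simp [this]
  rw [this, ← Nat.prod_factorization_eq_prod_primeFactors, Nat.factorization_prod_pow_eq_self h]

/-- The standard RPF natural evaluation function `α : 𝒟 → ℕ` is
surjective. -/
theorem alpha_surjective : ∀ n : ℕ, ∃ w : List Bool, IsDyck w ∧ alpha w = n := by
  intro n
  induction n using Nat.strong_induction_on with
  | _ n ih =>
    rcases Nat.eq_zero_or_pos n with rfl | hn
    · exact ⟨[], isDyck_nil, by simp [alpha]⟩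
    · have hlt : ∀ j : Fin (n+1), n.factorization (Nat.nth Nat.Prime j) < n :=
        fun j => Nat.factorization_lt _ (by omega)
      set L : List (List Bool) :=
        List.ofFn (fun j : Fin (n+1) => (ih _ (hlt j)).choose) with hL
    
      have hLd : ∀ d ∈ L, IsDyck d := by
        intro d hd
        rw [hL, List.mem_ofFn] at hd
        obtain ⟨j, rfl⟩ := hd
        exact (ih _ (hlt j)).choose_spec.1
      have hlen : L.length = n + 1 := by simp [hL]
      have hget : ∀ j (hj : j < n+1), L.getD j [] = (ih _ (hlt ⟨j, hj⟩)).choose := by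
        intro j hj
        rw [hL, List.getD_eq_getElem _ _ (by simp [hj]), List.getElem_ofFn]
      refine ⟨W L, W_isDyck L hLd, ?_⟩
      have hWne : W L ≠ [] := by
        rw [hL]
        have : (n:ℕ) + 1 = n + 1 := rfl
        cases hc : List.ofFn (fun j : Fin (n+1) => (ih _ (hlt j)).choose) with
        | nil => exfalso; have := congrArg List.length hc; simp at this
        | cons a l => simp [W, chunk]
      rw [alpha, if_neg hWne, alphaAux_W L hLd 0, hlen]
      have : ∀ j ∈ Finset.range (n+1),
          (Nat.nth Nat.Prime (0+j)) ^ alpha (L.getD j [])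
            = (Nat.nth Nat.Prime j)^(n.factorization (Nat.nth Nat.Prime j)) := by
        intro j hj
        rw [Finset.mem_range] at hj
        rw [hget j hj, (ih _ (hlt ⟨j, hj⟩)).choose_spec.2, zero_add]
      rw [Finset.prod_congr rfl this, prod_fact n (by omega)]
end

section
/- The standard RPF rational spelling function γ_ℚ : ℚ → Σ* restricted to negative rationals satisfies γ_ℚ(q) = γ_ℚ(|q|) ++ "()", and γ_ℚ is injective on ℚ. -/
/-- The exponent of the `i`-th prime (0-indexed) in the rational prime factorization
of `q`. -/
noncomputable def qExp (q : ℚ) (i : ℕ) : ℤ :=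
  (q.num.natAbs.factorization (Nat.nth Nat.Prime i) : ℤ)
    - (q.den.factorization (Nat.nth Nat.Prime i) : ℤ)

/-- The defining recursion for the standard RPF rational spelling function:
`γ_ℚ 0 = ε`, `γ_ℚ 1 = "()"`, `γ_ℚ q = γ_ℚ |q| ++ "()"` for `q < 0`, and for positive
`q ≠ 1`, `γ_ℚ q = ⊕_{i<m} ("(" ++ γ_ℚ aᵢ ++ ")")` where `aᵢ = qExp q i` and the
`(m-1)`-st prime is the greatest prime base of `q` (the largest prime dividing
numerator or denominator). -/
def GammaQSpec (g : ℚ → List Bool) : Prop :=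
  g 0 = [] ∧ g 1 = [true, false] ∧
  (∀ q : ℚ, q < 0 → g q = g |q| ++ [true, false]) ∧
  (∀ q : ℚ, 0 < q → q ≠ 1 →
    g q = ((List.range (Nat.count Nat.Prime
          ((q.num.natAbs * q.den).factorization.support.sup id) + 1)).map
      (fun i => (true :: g ((qExp q i : ℤ) : ℚ)) ++ [false])).flatten)

namespace GQ


def mu (q : ℚ) : ℕ := 2 * (q.num.natAbs * q.den) + (if q < 0 then 1 else 0)

noncomputable def bigM (q : ℚ) : ℕ :=
  Nat.count Nat.Prime ((q.num.natAbs * q.den).factorization.support.sup id)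

lemma num_natAbs_ne {q : ℚ} (h : q ≠ 0) : q.num.natAbs ≠ 0 := by
  simpa [Int.natAbs_eq_zero, Rat.num_eq_zero] using h

lemma qExp_natAbs_lt {q : ℚ} (hq : q ≠ 0) (i : ℕ) :
    (qExp q i).natAbs < q.num.natAbs * q.den := by
  set p := Nat.nth Nat.Prime i with hp
  have hpp : p.Prime := Nat.prime_nth_prime i
  have hnum : q.num.natAbs ≠ 0 := num_natAbs_ne hq
  set a := q.num.natAbs.factorization p with ha
  set b := q.den.factorization p with hb
  have h1 : p ^ a ≤ q.num.natAbs :=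
    Nat.le_of_dvd (Nat.pos_of_ne_zero hnum) (Nat.ordProj_dvd _ _)
  have h2 : p ^ b ≤ q.den := Nat.le_of_dvd q.pos (Nat.ordProj_dvd _ _)
  have h3 : 2 ^ (a + b) ≤ q.num.natAbs * q.den := by
    calc 2 ^ (a + b) = 2 ^ a * 2 ^ b := pow_add 2 a b
    _ ≤ p ^ a * p ^ b :=
      Nat.mul_le_mul (Nat.pow_le_pow_left hpp.two_le a) (Nat.pow_le_pow_left hpp.two_le b)
    _ ≤ _ := Nat.mul_le_mul h1 h2
  have h4 : a + b < q.num.natAbs * q.den := lt_of_lt_of_le Nat.lt_two_pow_self h3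
  have h5 : (qExp q i).natAbs ≤ a + b := by
    have := Int.natAbs_sub_le (a : ℤ) (b : ℤ)
    simpa [qExp, ← hp, ← ha, ← hb] using this
  exact lt_of_le_of_lt h5 h4

lemma mu_abs_lt {q : ℚ} (h : q < 0) : mu |q| < mu q := by
  have habs : |q| = -q := abs_of_neg h
  have h1 : |q|.num.natAbs = q.num.natAbs := by rw [habs]; simp
  have h2 : |q|.den = q.den := by rw [habs]; simp
  have h3 : ¬ |q| < 0 := not_lt.mpr (abs_nonneg q)
  simp [mu, h1, h2, h3, h, Int.natAbs_abs]

lemma mu_int_lt {q : ℚ} (hq : q ≠ 0) (i : ℕ) :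
    mu ((qExp q i : ℤ) : ℚ) < mu q := by
  have h := qExp_natAbs_lt hq i
  have hlt : ¬ q < 0 → mu q = 2 * (q.num.natAbs * q.den) := by intro h'; simp [mu, h']
  have : mu ((qExp q i : ℤ) : ℚ)
      = 2 * (qExp q i).natAbs + (if ((qExp q i : ℤ) : ℚ) < 0 then 1 else 0) := by
    simp [mu, Rat.num_intCast, Rat.den_intCast]
  rw [this]
  have : (if ((qExp q i : ℤ) : ℚ) < 0 then 1 else 0) ≤ 1 := by split <;> omega
  simp only [mu]
  omega

noncomputable def g (q : ℚ) : List Bool :=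
  if q = 0 then []
  else if q = 1 then [true, false]
  else if h : q < 0 then g |q| ++ [true, false]
  else ((List.range (bigM q + 1)).map
      (fun i => (true :: g ((qExp q i : ℤ) : ℚ)) ++ [false])).flatten
termination_by mu q
decreasing_by
  · exact mu_abs_lt h
  · exact mu_int_lt (by assumption) i

lemma g_zero : g 0 = [] := by rw [g]; simp

lemma g_one : g 1 = [true, false] := by rw [g]; norm_num

lemma g_neg {q : ℚ} (h : q < 0) : g q = g |q| ++ [true, false] := by
  rw [g]; simp [h.ne, (h.trans zero_lt_one).ne, h]

lemma g_pos {q : ℚ} (h0 : 0 < q) (h1 : q ≠ 1) :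
    g q = ((List.range (bigM q + 1)).map
      (fun i => (true :: g ((qExp q i : ℤ) : ℚ)) ++ [false])).flatten := by
  rw [g]; simp [h0.ne', h1, h0.not_gt]


-- counting machinery
def D (w : List Bool) : ℤ := (w.count true : ℤ) - (w.count false : ℤ)

def Ok (w : List Bool) : Prop := D w = 0 ∧ ∀ n, 0 ≤ D (w.take n)

lemma D_nil : D [] = 0 := by simp [D]

lemma D_append (u v : List Bool) : D (u ++ v) = D u + D v := by
  simp [D, List.count_append]; ring

lemma Ok_nil : Ok [] := ⟨D_nil, fun n => by simp [D]⟩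

lemma Ok_append {u v : List Bool} (hu : Ok u) (hv : Ok v) : Ok (u ++ v) := by
  refine ⟨by rw [D_append, hu.1, hv.1]; ring, fun n => ?_⟩
  rw [List.take_append, D_append]
  have := hu.2 n
  have := hv.2 (n - u.length)
  omega

lemma Ok_block {u : List Bool} (hu : Ok u) : Ok ((true :: u) ++ [false]) := by
  have hD : D ((true :: u) ++ [false]) = 0 := by
    simp [D, List.count_append, List.count_cons] at *
    have := hu.1
    simp [D] at this
    omega
  refine ⟨hD, fun n => ?_⟩
  match n with
  | 0 => simp [D]
  | n + 1 =>
    have : ((true :: u) ++ [false]).take (n+1) = true :: (u ++ [false]).take n := by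
      simp
    rw [this]
    have h1 : D (true :: (u ++ [false]).take n) = 1 + D ((u ++ [false]).take n) := by
      simp [D, List.count_cons]; ring
    rw [h1, List.take_append, D_append]
    have h2 := hu.2 n
    have h3 : -1 ≤ D (List.take (n - u.length) [false]) := by
      match n - u.length with
      | 0 => simp [D]
      | m + 1 => simp [D]
    omega

lemma Ok_flatten {L : List (List Bool)} (h : ∀ w ∈ L, Ok w) : Ok L.flatten := by
  induction L with
  | nil => simpa using Ok_nil
  | cons w L ih =>
    rw [List.flatten_cons]
    exact Ok_append (h w (by simp)) (ih fun w' hw' => h w' (by simp [hw']))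

lemma block_cancel {u v s t : List Bool} (hu : Ok u) (hv : Ok v)
    (h : (true :: u) ++ [false] ++ s = (true :: v) ++ [false] ++ t) : u = v ∧ s = t := by
  have h' : u ++ ([false] ++ s) = v ++ ([false] ++ t) := by
    simpa [List.append_assoc] using h
  have key : ∀ (a b x y : List Bool), Ok a → Ok b → a ++ ([false] ++ x) = b ++ ([false] ++ y) →
      a.length < b.length → False := by
    intro a b x y ha hb hab hlen
    have hL : (a ++ ([false] ++ x)).take (a.length + 1) = a ++ [false] := by
      rw [List.take_append]
      simp
    have hR : (b ++ ([false] ++ y)).take (a.length + 1) = b.take (a.length + 1) := by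
      rw [List.take_append_of_le_length (by omega)]
    have heq : a ++ [false] = b.take (a.length + 1) := by rw [← hL, hab, hR]
    have h1 : 0 ≤ D (a ++ [false]) := heq ▸ hb.2 (a.length + 1)
    rw [D_append, ha.1] at h1
    simp [D] at h1
  rcases lt_trichotomy u.length v.length with hlt | heq | hgt
  · exact absurd (key u v s t hu hv h' hlt) (by simp)
  · obtain ⟨h1, h2⟩ := List.append_inj h' heq
    exact ⟨h1, by simpa using h2⟩
  · exact absurd (key v u t s hv hu h'.symm hgt) (by simp)

lemma blocks_inj : ∀ (L1 L2 : List (List Bool)), (∀ w ∈ L1, Ok w) → (∀ w ∈ L2, Ok w) →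
    (L1.map (fun w => (true :: w) ++ [false])).flatten
      = (L2.map (fun w => (true :: w) ++ [false])).flatten → L1 = L2 := by
  intro L1
  induction L1 with
  | nil =>
    intro L2 _ _ h
    cases L2 with
    | nil => rfl
    | cons v L2 => simp at h
  | cons u L1 ih =>
    intro L2 h1 h2 h
    cases L2 with
    | nil => simp at h
    | cons v L2 =>
      simp only [List.map_cons, List.flatten_cons] at h
      obtain ⟨huv, hrest⟩ := block_cancel (h1 u (by simp)) (h2 v (by simp)) (by
        simpa [List.append_assoc] using h)
      rw [huv, ih L2 (fun w hw => h1 w (by simp [hw])) (fun w hw => h2 w (by simp [hw])) hrest]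





lemma N_ne_zero {q : ℚ} (h : q ≠ 0) : q.num.natAbs * q.den ≠ 0 := by
  have : q.num.natAbs ≠ 0 := num_natAbs_ne h
  positivity

lemma one_lt_N {q : ℚ} (h0 : 0 < q) (h1 : q ≠ 1) : 1 < q.num.natAbs * q.den := by
  have hz := N_ne_zero h0.ne'
  rcases Nat.lt_or_ge (q.num.natAbs * q.den) 2 with h | h
  · exfalso
    have h1' : q.num.natAbs * q.den = 1 := by omega
    have ha : q.num.natAbs = 1 := Nat.eq_one_of_mul_eq_one_right h1'
    have hb : q.den = 1 := Nat.eq_one_of_mul_eq_one_left h1'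
    have hnum : q.num = 1 := by
      have := Rat.num_pos.mpr h0
      omega
    exact h1 (by rw [← Rat.num_div_den q, hnum, hb]; norm_num)
  · omega

lemma sup_mem {q : ℚ} (h0 : 0 < q) (h1 : q ≠ 1) :
    (q.num.natAbs * q.den).factorization.support.sup id
      ∈ (q.num.natAbs * q.den).factorization.support := by
  have hne : (q.num.natAbs * q.den).factorization.support.Nonempty := by
    rw [Nat.support_factorization]
    exact Nat.nonempty_primeFactors.mpr (one_lt_N h0 h1)
  have := Finset.max'_mem _ hne
  rwa [Finset.max', Finset.sup'_eq_sup] at this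

-- exactly one of num/den divisible by a prime
lemma not_both_dvd {q : ℚ} (p : ℕ) (hp : p.Prime) :
    q.num.natAbs.factorization p = 0 ∨ q.den.factorization p = 0 := by
  by_contra hc
  push_neg at hc
  have h1 : p ∣ q.num.natAbs := Nat.dvd_of_factorization_pos hc.1
  have h2 : p ∣ q.den := Nat.dvd_of_factorization_pos hc.2
  have := Nat.dvd_gcd h1 h2
  rw [q.reduced] at this
  exact hp.one_lt.ne' (Nat.eq_one_of_dvd_one this)

lemma qExp_bigM_ne_zero {q : ℚ} (h0 : 0 < q) (h1 : q ≠ 1) : qExp q (bigM q) ≠ 0 := by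
  set P := (q.num.natAbs * q.den).factorization.support.sup id with hP
  have hmem := sup_mem h0 h1
  rw [← hP, Nat.support_factorization, Nat.mem_primeFactors] at hmem
  obtain ⟨hPp, hPdvd, -⟩ := hmem
  have hnth : Nat.nth Nat.Prime (bigM q) = P := Nat.nth_count hPp
  have hdvd : P ∣ q.num.natAbs ∨ P ∣ q.den := hPp.dvd_mul.mp hPdvd
  have hone := not_both_dvd (q := q) P hPp
  have hnum0 : q.num.natAbs ≠ 0 := num_natAbs_ne h0.ne'
  have hden0 : q.den ≠ 0 := q.den_nz
  rw [qExp, hnth]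
  rcases hdvd with hd | hd
  · have hpos : q.num.natAbs.factorization P ≠ 0 :=
      (Nat.Prime.factorization_pos_of_dvd hPp hnum0 hd).ne'
    rcases hone with h | h
    · exact absurd h hpos
    · rw [h]; simpa using hpos
  · have hpos : q.den.factorization P ≠ 0 :=
      (Nat.Prime.factorization_pos_of_dvd hPp hden0 hd).ne'
    have hn0 : q.num.natAbs.factorization P = 0 := by
      rcases hone with h | h
      · exact h
      · exact absurd h hpos
    rw [hn0]
    simpa using hpos

-- exponents vanish beyond bigM
lemma qExp_eq_zero_of_gt {q : ℚ} (h0 : 0 < q) (i : ℕ) (hi : bigM q < i) :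
    qExp q i = 0 := by
  set p := Nat.nth Nat.Prime i with hp
  have hpp : p.Prime := Nat.prime_nth_prime i
  have hci : Nat.count Nat.Prime p = i :=
    Nat.count_nth_of_infinite Nat.infinite_setOf_prime i
  have hnum0 : q.num.natAbs ≠ 0 := num_natAbs_ne h0.ne'
  have hden0 : q.den ≠ 0 := q.den_nz
  have hnotmem : p ∉ (q.num.natAbs * q.den).factorization.support := by
    intro hmem
    have hle : p ≤ (q.num.natAbs * q.den).factorization.support.sup id :=
      Finset.le_sup (f := id) hmem
    have := Nat.count_monotone Nat.Prime hle
    rw [hci] at this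
    rw [bigM] at hi
    omega
  rw [Nat.support_factorization, Nat.primeFactors_mul hnum0 hden0, Finset.mem_union,
    Nat.mem_primeFactors, Nat.mem_primeFactors] at hnotmem
  push_neg at hnotmem
  have h1 : q.num.natAbs.factorization p = 0 :=
    Nat.factorization_eq_zero_of_not_dvd (fun hd => by simp [hpp, hd, hnum0] at hnotmem)
  have h2 : q.den.factorization p = 0 :=
    Nat.factorization_eq_zero_of_not_dvd (fun hd => by simp [hpp, hd, hden0] at hnotmem)
  rw [qExp, ← hp, h1, h2]
  simp

-- positive rationals with equal exponents agree
lemma eq_of_qExp_eq {q1 q2 : ℚ} (h1 : 0 < q1) (h2 : 0 < q2)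
    (hM : bigM q1 = bigM q2) (h : ∀ i ≤ bigM q1, qExp q1 i = qExp q2 i) : q1 = q2 := by
  have hall : ∀ i, qExp q1 i = qExp q2 i := by
    intro i
    rcases le_or_gt i (bigM q1) with hle | hlt
    · exact h i hle
    · rw [qExp_eq_zero_of_gt h1 i hlt, qExp_eq_zero_of_gt h2 i (hM ▸ hlt)]
  have hnum1 : q1.num.natAbs ≠ 0 := num_natAbs_ne h1.ne'
  have hnum2 : q2.num.natAbs ≠ 0 := num_natAbs_ne h2.ne'
  have key : ∀ p : ℕ, q1.num.natAbs.factorization p = q2.num.natAbs.factorization p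
      ∧ q1.den.factorization p = q2.den.factorization p := by
    intro p
    by_cases hpp : p.Prime
    · have he := hall (Nat.count Nat.Prime p)
      rw [qExp, qExp, Nat.nth_count hpp] at he
      have o1 := not_both_dvd (q := q1) p hpp
      have o2 := not_both_dvd (q := q2) p hpp
      omega
    · simp [Nat.factorization_eq_zero_of_not_prime _ hpp]
  have hnum : q1.num.natAbs = q2.num.natAbs := by
    apply Nat.factorization_inj (by simpa using hnum1) (by simpa using hnum2)
    ext p
    exact (key p).1
  have hden : q1.den = q2.den := by
    apply Nat.factorization_inj (by simpa using q1.den_nz) (by simpa using q2.den_nz)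
    ext p
    exact (key p).2
  have hn1 := Rat.num_pos.mpr h1
  have hn2 := Rat.num_pos.mpr h2
  have : q1.num = q2.num := by omega
  exact Rat.ext this hden



lemma Ok_TF : Ok [true, false] := Ok_block Ok_nil

lemma Ok_g : ∀ q, Ok (g q) := by
  have H : ∀ n q, mu q ≤ n → Ok (g q) := by
    intro n
    induction n using Nat.strong_induction_on with
    | _ n ih =>
      intro q hq
      rcases eq_or_ne q 0 with rfl | h0
      · rw [g_zero]; exact Ok_nil
      rcases eq_or_ne q 1 with rfl | h1
      · rw [g_one]; exact Ok_TF
      rcases h0.lt_or_gt with hneg | hpos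
      · rw [g_neg hneg]
        have hlt := mu_abs_lt hneg
        exact Ok_append (ih (mu |q|) (by omega) |q| le_rfl) Ok_TF
      · rw [g_pos hpos h1]
        apply Ok_flatten
        intro w hw
        simp only [List.mem_map, List.mem_range] at hw
        obtain ⟨i, -, rfl⟩ := hw
        have hlt := mu_int_lt h0 i
        exact Ok_block (ih _ (by omega) _ le_rfl)
  exact fun q => H (mu q) q le_rfl

lemma g_ends_false {q : ℚ} (h0 : q ≠ 0) : ∃ w, g q = w ++ [false] := by
  rcases eq_or_ne q 1 with rfl | h1
  · exact ⟨[true], by rw [g_one]; rfl⟩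
  rcases h0.lt_or_gt with hneg | hpos
  · exact ⟨g |q| ++ [true], by rw [g_neg hneg]; simp⟩
  · refine ⟨(((List.range (bigM q)).map
        (fun i => (true :: g ((qExp q i : ℤ) : ℚ)) ++ [false])).flatten
        ++ (true :: g ((qExp q (bigM q) : ℤ) : ℚ))), ?_⟩
    rw [g_pos hpos h1, List.range_succ]
    simp

lemma g_ne_nil {q : ℚ} (h0 : q ≠ 0) : g q ≠ [] := by
  obtain ⟨w, hw⟩ := g_ends_false h0
  simp [hw]

lemma g_pos_shape {q : ℚ} (hpos : 0 < q) (h1 : q ≠ 1) : ∃ w, g q = w ++ [false, false] := by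
  have ha : ((qExp q (bigM q) : ℤ) : ℚ) ≠ 0 := by
    exact_mod_cast qExp_bigM_ne_zero hpos h1
  obtain ⟨u, hu⟩ := g_ends_false ha
  refine ⟨(((List.range (bigM q)).map
      (fun i => (true :: g ((qExp q i : ℤ) : ℚ)) ++ [false])).flatten
      ++ (true :: u)), ?_⟩
  rw [g_pos hpos h1, List.range_succ]
  simp [hu]

lemma g_neg_shape {q : ℚ} (h : q < 0) : ∃ w, w ≠ [] ∧ g q = w ++ [true, false] :=
  ⟨g |q|, g_ne_nil (abs_ne_zero.mpr h.ne), g_neg h⟩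

lemma ends_distinct {w1 w2 : List Bool} : w1 ++ [true, false] ≠ w2 ++ [false, false] := by
  intro h
  have := congrArg List.reverse h
  simp at this

lemma one_ne_long {w : List Bool} (hw : w ≠ []) : [true, false] ≠ w ++ [true, false] := by
  intro h
  have hl := congrArg List.length h
  simp at hl
  exact hw hl

lemma shape_cases {q : ℚ} (h0 : q ≠ 0) : q = 1 ∨ q < 0 ∨ (0 < q ∧ q ≠ 1) := by
  rcases eq_or_ne q 1 with rfl | h1
  · exact Or.inl rfl
  rcases h0.lt_or_gt with h | h
  · exact Or.inr (Or.inl h)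
  · exact Or.inr (Or.inr ⟨h, h1⟩)

lemma g_inj : Function.Injective g := by
  have H : ∀ n q1 q2, mu q1 + mu q2 ≤ n → g q1 = g q2 → q1 = q2 := by
    intro n
    induction n using Nat.strong_induction_on with
    | _ n ih =>
      intro q1 q2 hn h
      rcases eq_or_ne q1 0 with rfl | h10
      · rcases eq_or_ne q2 0 with rfl | h20
        · rfl
        · exact absurd (h.symm.trans g_zero) (g_ne_nil h20)
      rcases eq_or_ne q2 0 with rfl | h20
      · exact absurd (h.trans g_zero) (g_ne_nil h10)
      rcases shape_cases h10 with rfl | hneg1 | ⟨hpos1, hne1⟩ <;>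
        rcases shape_cases h20 with rfl | hneg2 | ⟨hpos2, hne2⟩
      · rfl
      · obtain ⟨w, hw, he⟩ := g_neg_shape hneg2
        rw [g_one, he] at h
        exact absurd h (one_ne_long hw)
      · obtain ⟨w, he⟩ := g_pos_shape hpos2 hne2
        rw [g_one, he] at h
        exact absurd (show ([] : List Bool) ++ [true, false] = w ++ [false, false] by
          simpa using h) ends_distinct
      · obtain ⟨w, hw, he⟩ := g_neg_shape hneg1
        rw [g_one, he] at h
        exact absurd h.symm (one_ne_long hw)
      · -- q1 < 0, q2 < 0
        rw [g_neg hneg1, g_neg hneg2] at h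
        have heq : g |q1| = g |q2| := List.append_cancel_right h
        have hlt1 := mu_abs_lt hneg1
        have hlt2 := mu_abs_lt hneg2
        have habs : |q1| = |q2| :=
          ih (mu |q1| + mu |q2|) (by omega) _ _ le_rfl heq
        rw [abs_of_neg hneg1, abs_of_neg hneg2] at habs
        exact neg_injective habs
      · -- q1 < 0, q2 > 0
        obtain ⟨w2, hw2, he2⟩ := g_neg_shape hneg1
        obtain ⟨w1, he1⟩ := g_pos_shape hpos2 hne2
        rw [he1, he2] at h
        exact absurd h ends_distinct
      · obtain ⟨w, he⟩ := g_pos_shape hpos1 hne1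
        rw [g_one, he] at h
        exact absurd (show ([] : List Bool) ++ [true, false] = w ++ [false, false] by
          simpa using h.symm) ends_distinct
      · -- q1 > 0, q2 < 0
        obtain ⟨w2, hw2, he2⟩ := g_neg_shape hneg2
        obtain ⟨w1, he1⟩ := g_pos_shape hpos1 hne1
        rw [he1, he2] at h
        exact absurd h.symm ends_distinct
      · -- both positive, ≠ 1 : the main case
        rw [g_pos hpos1 hne1, g_pos hpos2 hne2] at h
        rw [show (fun i => (true :: g ((qExp q1 i : ℤ) : ℚ)) ++ [false])
            = (fun w => (true :: w) ++ [false]) ∘ (fun i => g ((qExp q1 i : ℤ) : ℚ))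
            from rfl,
          show (fun i => (true :: g ((qExp q2 i : ℤ) : ℚ)) ++ [false])
            = (fun w => (true :: w) ++ [false]) ∘ (fun i => g ((qExp q2 i : ℤ) : ℚ))
            from rfl, ← List.map_map, ← List.map_map] at h
        have hLL := blocks_inj _ _
          (by intro w hw; simp only [List.mem_map] at hw; obtain ⟨i, -, rfl⟩ := hw
              exact Ok_g _)
          (by intro w hw; simp only [List.mem_map] at hw; obtain ⟨i, -, rfl⟩ := hw
              exact Ok_g _) h
        have hM : bigM q1 = bigM q2 := by
          have := congrArg List.length hLL
          simpa using this
        rw [hM] at hLL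
        have hpt := List.map_inj_left.mp hLL
        apply eq_of_qExp_eq hpos1 hpos2 hM
        intro i hi
        have hi2 : i ∈ List.range (bigM q2 + 1) := by
          simp only [List.mem_range]; omega
        have hgi : g ((qExp q1 i : ℤ) : ℚ) = g ((qExp q2 i : ℤ) : ℚ) := hpt i hi2
        have hlt1 := mu_int_lt h10 i
        have hlt2 := mu_int_lt h20 i
        have : ((qExp q1 i : ℤ) : ℚ) = ((qExp q2 i : ℤ) : ℚ) :=
          ih (mu ((qExp q1 i : ℤ) : ℚ) + mu ((qExp q2 i : ℤ) : ℚ)) (by omega)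
            _ _ le_rfl hgi
        exact_mod_cast this
  exact fun a b h => H (mu a + mu b) a b le_rfl h

end GQ

/-- The standard RPF rational spelling function `γ_ℚ` (a function
satisfying its defining recursion, `GammaQSpec`) satisfies
`γ_ℚ q = γ_ℚ |q| ++ "()"` for negative `q`, and is injective on `ℚ`. -/

theorem gammaQ_neg_and_injective :
    ∃ g : ℚ → List Bool, GammaQSpec g ∧
      (∀ q : ℚ, q < 0 → g q = g |q| ++ [true, false]) ∧
      Function.Injective g := by
  refine ⟨GQ.g, ⟨GQ.g_zero, GQ.g_one, fun q h => GQ.g_neg h, fun q h0 h1 => ?_⟩,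
    fun q h => GQ.g_neg h, GQ.g_inj⟩
  exact GQ.g_pos h0 h1
end

section
/- For every rational number q, the word γ_ℚ(q) is a Dyck word of finite length, and α_ℚ(γ_ℚ(q)) = q, where α_ℚ is the standard RPF rational evaluation; hence every rational number is represented by a finite Dyck word. -/
/-- The defining recursion for the standard RPF rational evaluation `α_ℚ`:
`α_ℚ ε = 0`, and writing `w = w' ++ z` with `z` the longest suffix of empty pairs
"()" such that `w' ≠ ε` (so either `w' = "()"` or `w'` does not end in "()"),
`α_ℚ w = (-1)^(dim z) ∏_{i < dim w'} pᵢ ^ α_ℚ(dᵢ)` where `(dᵢ)` are the chunks of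
`w'`.  (Values are taken in `ℝ` so that the prime-power exponentiation by the
recursively obtained values makes sense; `^` is real exponentiation.) -/
def AlphaQSpec (a : List Bool → ℝ) : Prop :=
  a [] = 0 ∧
  ∀ (w' : List Bool) (k : ℕ) (l : List (List Bool)),
    w' ≠ [] → (w' = [true, false] ∨ ¬ ([true, false] <:+ w')) →
    (∀ d ∈ l, IsDyck d) →
    w' = (l.map (fun d => (true :: d) ++ [false])).flatten →
    a (w' ++ (List.replicate k ([true, false])).flatten) =
      (-1 : ℝ) ^ k * ∏ i ∈ Finset.range l.length,
        ((Nat.nth Nat.Prime i : ℝ)) ^ (a (l.getD i []))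


namespace RPF

def chunk (d : List Bool) : List Bool := (true :: d) ++ [false]

lemma isDyck_nil : IsDyck [] := ⟨by simp, by simp⟩

lemma isDyck_append {u v : List Bool} (hu : IsDyck u) (hv : IsDyck v) :
    IsDyck (u ++ v) := by
  constructor
  · intro k
    rw [List.take_append, List.count_append, List.count_append]
    have h1 := hu.1 k
    have h2 := hv.1 (k - u.length)
    omega
  · simp [List.count_append, hu.2, hv.2]

lemma isDyck_chunk {d : List Bool} (h : IsDyck d) : IsDyck (chunk d) := by
  constructor
  · intro k
    cases k with
    | zero => simp
    | succ k =>
      have hd := h.1 k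
      have e1 : (List.take (k+1) (chunk d)) = true :: List.take k (d ++ [false]) := by
        simp [chunk]
      rw [e1, List.take_append, List.count_cons, List.count_cons,
        List.count_append, List.count_append]
      set t := List.take (k - d.length) [false] with ht
      have h1 : t.count false ≤ 1 := by
        have := List.count_le_length (a := false) (l := t)
        have h2 : t.length ≤ 1 := by simp [ht, List.length_take]
        omega
      have h2 : t.count true = 0 := by
        rcases (k - d.length).eq_zero_or_pos with h' | h'
        · simp [ht, h']
        · have he : t = [false] := by
            rw [ht]; apply List.take_of_length_le; simp; omega
          simp [he]
      simp
      omega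
  · simp [chunk, List.count_append, List.count_cons, h.2]

lemma isDyck_prefix_count {w p : List Bool} (h : IsDyck w) (hp : p <+: w) :
    p.count false ≤ p.count true := by
  have := h.1 p.length
  rwa [List.prefix_iff_eq_take.mp hp]

lemma isDyck_ends_false {w : List Bool} (h : IsDyck w) (hne : w ≠ []) :
    ∃ w₀, w = w₀ ++ [false] := by
  refine ⟨w.dropLast, ?_⟩
  have hl := List.dropLast_append_getLast hne
  rcases hb : w.getLast hne with _ | _
  · rw [hb] at hl; exact hl.symm
  · exfalso
    have h1 := h.1 (w.length - 1)
    rw [← List.dropLast_eq_take] at h1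
    have h2 := h.2
    rw [← hl, hb] at h2
    simp [List.count_append, List.count_cons] at h2
    omega

lemma dyck_eq_of_append {d d' r r' : List Bool} (hd : IsDyck d) (hd' : IsDyck d')
    (h : d ++ [false] ++ r = d' ++ [false] ++ r') : d = d' := by
  -- helper: strict length inequality is impossible
  have key : ∀ (a b x y : List Bool), IsDyck a → IsDyck b →
      a ++ [false] ++ x = b ++ [false] ++ y → a.length < b.length → False := by
    intro a b x y ha hb heq hlt
    have hpre : a ++ [false] <+: b := by
      have h1 : a ++ [false] <+: b ++ [false] ++ y := ⟨x, heq⟩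
      have hb2 : b <+: b ++ [false] ++ y := ⟨[false] ++ y, by simp⟩
      exact List.prefix_of_prefix_length_le h1 hb2 (by simp; omega)
    have := isDyck_prefix_count hb hpre
    simp [List.count_append, ha.2] at this
  rcases lt_trichotomy d.length d'.length with hl | hl | hl
  · exact absurd (key d d' r r' hd hd' h hl) (by simp)
  · exact List.append_inj_left (by simpa [List.append_assoc] using h) hl
  · exact absurd (key d' d r' r hd' hd h.symm hl) (by simp)

lemma chunks_flatten_inj : ∀ (l l' : List (List Bool)), (∀ d ∈ l, IsDyck d) →
    (∀ d ∈ l', IsDyck d) → (l.map chunk).flatten = (l'.map chunk).flatten → l = l' := by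
  intro l
  induction l with
  | nil =>
    intro l' _ _ h
    cases l' with
    | nil => rfl
    | cons d t => simp [chunk] at h
  | cons d t ih =>
    intro l' hl hl' h
    cases l' with
    | nil => simp [chunk] at h
    | cons d' t' =>
      simp only [List.map_cons, List.flatten_cons, chunk, List.cons_append,
        List.cons.injEq, true_and] at h
      have h2 : d ++ [false] ++ (t.map chunk).flatten
          = d' ++ [false] ++ (t'.map chunk).flatten := by
        simpa [List.append_assoc] using h
      have hd : IsDyck d := hl d (by simp)
      have hd' : IsDyck d' := hl' d' (by simp)
      have hdd : d = d' := dyck_eq_of_append hd hd' h2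
      subst hdd
      have h3 : (t.map chunk).flatten = (t'.map chunk).flatten := by
        apply List.append_cancel_left (as := d ++ [false]); simpa [List.append_assoc] using h2
      have := ih t' (fun x hx => hl x (by simp [hx])) (fun x hx => hl' x (by simp [hx])) h3
      rw [this]

def pairs (k : ℕ) : List Bool := (List.replicate k ([true, false])).flatten

lemma pairs_succ (k : ℕ) : pairs (k + 1) = pairs k ++ [true, false] := by
  simp [pairs, List.replicate_succ']

lemma pairs_add (a b : ℕ) : pairs (a + b) = pairs a ++ pairs b := by
  rw [pairs, pairs, pairs, List.replicate_add, List.flatten_append]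

lemma pairs_length (k : ℕ) : (pairs k).length = 2 * k := by
  induction k with
  | zero => simp [pairs]
  | succ n ih => rw [pairs_succ]; simp [ih]; omega

def Valid (w : List Bool) (t : List Bool × ℕ × List (List Bool)) : Prop :=
  t.1 ≠ [] ∧ (t.1 = [true, false] ∨ ¬ ([true, false] <:+ t.1)) ∧
  (∀ d ∈ t.2.2, IsDyck d) ∧
  t.1 = (t.2.2.map (fun d => (true :: d) ++ [false])).flatten ∧
  w = t.1 ++ pairs t.2.1

lemma valid_w_ne_nil {w t} (h : Valid w t) : w ≠ [] := by
  rcases h with ⟨h1, _, _, _, h5⟩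
  rw [h5]; simp [h1]

lemma valid_two_le_length {w t} (h : Valid w t) : 2 ≤ t.1.length := by
  rcases h with ⟨h1, _, _, h4, _⟩
  rcases e : t.2.2 with _ | ⟨d, rest⟩
  · rw [e] at h4; simp at h4; exact absurd h4 h1
  · rw [h4, e]; simp [List.length_append]; omega

lemma valid_unique {w t t'} (h : Valid w t) (h' : Valid w t') : t = t' := by
  -- first: the k components are equal
  have key : ∀ u u' : List Bool × ℕ × List (List Bool), Valid w u → Valid w u' →
      u.2.1 < u'.2.1 → False := by
    intro u u' hu hu' hk
    obtain ⟨h1, h2, h3, h4, h5⟩ := hu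
    obtain ⟨h1', h2', h3', h4', h5'⟩ := hu'
    have hsplit : pairs u'.2.1 = pairs (u'.2.1 - u.2.1) ++ pairs u.2.1 := by
      rw [← pairs_add]; congr 1; omega
    have heq : u.1 = u'.1 ++ pairs (u'.2.1 - u.2.1) := by
      apply List.append_cancel_right (bs := pairs u.2.1)
      rw [← h5, h5', hsplit, List.append_assoc]
    have hsuf : [true, false] <:+ u.1 := by
      obtain ⟨j, hj⟩ : ∃ j, u'.2.1 - u.2.1 = j + 1 := ⟨u'.2.1 - u.2.1 - 1, by omega⟩
      rw [heq, hj, pairs_succ]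
      exact ⟨u'.1 ++ pairs j, by simp [List.append_assoc]⟩
    have hu1 : u.1 = [true, false] := by
      rcases h2 with h | h
      · exact h
      · exact absurd hsuf h
    have hlen := congrArg List.length heq
    rw [hu1] at hlen
    have := valid_two_le_length ⟨h1', h2', h3', h4', h5'⟩
    simp [pairs_length] at hlen
    omega
  have hk : t.2.1 = t'.2.1 := by
    rcases lt_trichotomy t.2.1 t'.2.1 with h0 | h0 | h0
    · exact absurd (key t t' h h' h0) (by simp)
    · exact h0
    · exact absurd (key t' t h' h h0) (by simp)
  obtain ⟨h1, h2, h3, h4, h5⟩ := h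
  obtain ⟨h1', h2', h3', h4', h5'⟩ := h'
  have hw : t.1 = t'.1 := by
    apply List.append_cancel_right (bs := pairs t.2.1)
    rw [← h5, h5', hk]
  have hl : t.2.2 = t'.2.2 := by
    apply chunks_flatten_inj _ _ h3 h3'
    show (t.2.2.map chunk).flatten = (t'.2.2.map chunk).flatten
    have e : chunk = fun d => (true :: d) ++ [false] := rfl
    rw [e, ← h4, ← h4', hw]
  obtain ⟨a, b, c⟩ := t; obtain ⟨a', b', c'⟩ := t'
  simp_all

lemma valid_chunk_length {w t} (h : Valid w t) {d} (hd : d ∈ t.2.2) :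
    d.length + 2 ≤ w.length := by
  obtain ⟨h1, h2, h3, h4, h5⟩ := h
  have hle : d.length + 2 ≤ t.1.length := by
    rw [h4, List.length_flatten]
    have hm : d.length + 2 ∈ (t.2.2.map (fun d => (true :: d) ++ [false])).map List.length := by
      rw [List.map_map]
      exact List.mem_map.mpr ⟨d, hd, by simp⟩
    exact List.le_sum_of_mem hm
  rw [h5]
  simp only [List.length_append]
  omega

open Classical in
noncomputable def aFun : ℕ → List Bool → ℝ
  | 0, _ => 0
  | (n+1), w =>
    if h : ∃ t, Valid w t then
      (-1 : ℝ) ^ h.choose.2.1 * ∏ i ∈ Finset.range h.choose.2.2.length,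
        ((Nat.nth Nat.Prime i : ℝ)) ^ (aFun n (h.choose.2.2.getD i []))
    else 0

lemma aFun_nil (n : ℕ) : aFun n [] = 0 := by
  cases n with
  | zero => rfl
  | succ n =>
    rw [aFun, dif_neg]
    rintro ⟨t, ht⟩
    exact valid_w_ne_nil ht rfl

lemma aFun_congr : ∀ (n m : ℕ) (w : List Bool), w.length ≤ n → w.length ≤ m →
    aFun n w = aFun m w := by
  intro n
  induction n with
  | zero =>
    intro m w hn _
    have : w = [] := List.eq_nil_of_length_eq_zero (by omega)
    subst this
    rw [aFun_nil, aFun_nil]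
  | succ n ih =>
    intro m w hn hm
    rcases eq_or_ne w [] with rfl | hw
    · rw [aFun_nil, aFun_nil]
    have hwl : 0 < w.length := List.length_pos_iff.mpr hw
    cases m with
    | zero => omega
    | succ m =>
      rw [aFun, aFun]
      by_cases h : ∃ t, Valid w t
      · rw [dif_pos h, dif_pos h]
        congr 1
        apply Finset.prod_congr rfl
        intro i hi
        rw [Finset.mem_range] at hi
        have hmem : h.choose.2.2.getD i [] ∈ h.choose.2.2 := by
          rw [List.getD_eq_getElem _ _ hi]
          exact List.getElem_mem hi
        have hlen := valid_chunk_length h.choose_spec hmem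
        rw [ih m _ (by omega) (by omega)]
      · rw [dif_neg h, dif_neg h]

noncomputable def alphaQ (w : List Bool) : ℝ := aFun w.length w

lemma alphaQ_nil : alphaQ [] = 0 := rfl

lemma alphaQ_valid {w t} (h : Valid w t) :
    alphaQ w = (-1 : ℝ) ^ t.2.1 * ∏ i ∈ Finset.range t.2.2.length,
      ((Nat.nth Nat.Prime i : ℝ)) ^ (alphaQ (t.2.2.getD i [])) := by
  have hw : w ≠ [] := valid_w_ne_nil h
  obtain ⟨N, hN⟩ : ∃ N, w.length = N + 1 :=
    ⟨w.length - 1, by have := List.length_pos_iff.mpr hw; omega⟩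
  have hex : ∃ t, Valid w t := ⟨t, h⟩
  have hch : hex.choose = t := valid_unique hex.choose_spec h
  rw [alphaQ, aFun_congr w.length (N+1) w le_rfl (by omega), aFun, dif_pos hex, hch]
  congr 1
  apply Finset.prod_congr rfl
  intro i hi
  rw [Finset.mem_range] at hi
  have hmem : t.2.2.getD i [] ∈ t.2.2 := by
    rw [List.getD_eq_getElem _ _ hi]
    exact List.getElem_mem hi
  have hlen := valid_chunk_length h hmem
  congr 1
  rw [alphaQ]
  exact aFun_congr N _ _ (by omega) le_rfl


lemma alphaQ_spec : AlphaQSpec alphaQ := by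
  refine ⟨alphaQ_nil, ?_⟩
  intro w' k l h1 h2 h3 h4
  have hv : Valid (w' ++ pairs k) (w', k, l) := ⟨h1, h2, h3, h4, rfl⟩
  have := alphaQ_valid hv
  simp only [pairs] at this
  exact this

/-! ### number theory -/

lemma nat_prod (N m : ℕ) (hN : N ≠ 0)
    (hm : ∀ p ∈ N.primeFactors, Nat.count Nat.Prime p < m) :
    ∏ i ∈ Finset.range m,
      (Nat.nth Nat.Prime i) ^ (N.factorization (Nat.nth Nat.Prime i)) = N := by
  have hinj : Function.Injective (Nat.nth Nat.Prime) :=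
    Nat.nth_injective Nat.infinite_setOf_prime
  have h1 : ∏ i ∈ Finset.range m, (Nat.nth Nat.Prime i) ^ (N.factorization (Nat.nth Nat.Prime i))
      = ∏ p ∈ (Finset.range m).image (Nat.nth Nat.Prime), p ^ N.factorization p :=
    (Finset.prod_image (f := fun p => p ^ N.factorization p) (fun x _ y _ h => hinj h)).symm
  have h2 : N.factorization.support ⊆ (Finset.range m).image (Nat.nth Nat.Prime) := by
    intro p hp
    have hp' : p ∈ N.primeFactors := by rwa [Nat.support_factorization] at hp
    exact Finset.mem_image.mpr ⟨Nat.count Nat.Prime p, Finset.mem_range.mpr (hm p hp'),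
      Nat.nth_count (Nat.prime_of_mem_primeFactors hp')⟩
  have h3 := Finset.prod_subset (f := fun p => p ^ N.factorization p) h2
    (fun p _ hp => by simp [Finsupp.notMem_support_iff.mp hp])
  rw [h1, ← h3]
  exact Nat.factorization_prod_pow_eq_self hN

lemma real_nat_prod (N m : ℕ) (hN : N ≠ 0)
    (hm : ∀ p ∈ N.primeFactors, Nat.count Nat.Prime p < m) :
    ∏ i ∈ Finset.range m,
      ((Nat.nth Nat.Prime i : ℝ)) ^ ((N.factorization (Nat.nth Nat.Prime i) : ℤ)) = N := by
  have := nat_prod N m hN hm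
  have h2 : ∀ i ∈ Finset.range m, ((Nat.nth Nat.Prime i : ℝ)) ^ ((N.factorization (Nat.nth Nat.Prime i) : ℤ))
      = (((Nat.nth Nat.Prime i) ^ (N.factorization (Nat.nth Nat.Prime i)) : ℕ) : ℝ) := by
    intro i _
    rw [zpow_natCast]
    push_cast
    ring
  rw [Finset.prod_congr rfl h2, ← Nat.cast_prod, this]

lemma prod_primes_eq (q : ℚ) (hq : 0 < q) :
    ∏ i ∈ Finset.range (Nat.count Nat.Prime
        ((q.num.natAbs * q.den).factorization.support.sup id) + 1),
      ((Nat.nth Nat.Prime i : ℝ)) ^ (qExp q i) = (q : ℝ) := by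
  set S := (q.num.natAbs * q.den).factorization.support.sup id with hS
  set m := Nat.count Nat.Prime S + 1 with hmdef
  have hn : q.num.natAbs ≠ 0 := by
    simp [Int.natAbs_ne_zero]
    exact ne_of_gt hq
  have hd : q.den ≠ 0 := q.den_nz
  have hcount : ∀ (M : ℕ), M ≠ 0 → M ∣ q.num.natAbs * q.den →
      ∀ p ∈ M.primeFactors, Nat.count Nat.Prime p < m := by
    intro M hM hdvd p hp
    have hp2 : p ∈ (q.num.natAbs * q.den).primeFactors :=
      Nat.primeFactors_mono hdvd (Nat.mul_ne_zero hn hd) hp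
    have hple : p ≤ S := by
      rw [hS]
      exact Finset.le_sup (f := id) (by rwa [Nat.support_factorization])
    have := Nat.count_monotone Nat.Prime hple
    omega
  have hpp : ∀ i : ℕ, (0 : ℝ) < (Nat.nth Nat.Prime i : ℝ) := by
    intro i
    exact_mod_cast (Nat.prime_nth_prime i).pos
  have key : ∀ i ∈ Finset.range m, ((Nat.nth Nat.Prime i : ℝ)) ^ (qExp q i)
      = ((Nat.nth Nat.Prime i : ℝ)) ^ ((q.num.natAbs.factorization (Nat.nth Nat.Prime i) : ℤ))
        / ((Nat.nth Nat.Prime i : ℝ)) ^ ((q.den.factorization (Nat.nth Nat.Prime i) : ℤ)) := by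
    intro i _
    rw [qExp, zpow_sub₀ (ne_of_gt (hpp i))]
  rw [Finset.prod_congr rfl key, Finset.prod_div_distrib,
    real_nat_prod _ m hn (hcount _ hn ⟨q.den, rfl⟩),
    real_nat_prod _ m hd (hcount _ hd ⟨q.num.natAbs, mul_comm _ _⟩),
    Rat.cast_def]
  congr 1
  have h0 : (0:ℤ) ≤ q.num := (Rat.num_pos.mpr hq).le
  rw [Nat.cast_natAbs, abs_of_nonneg h0]

end RPF

namespace RPF

def measureQ (q : ℚ) : ℕ := 2 * (q.num.natAbs * q.den) + (if q < 0 then 1 else 0)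

lemma two_le_nd {q : ℚ} (h0 : 0 < q) (h1 : q ≠ 1) : 2 ≤ q.num.natAbs * q.den := by
  have hn : 0 < q.num := Rat.num_pos.mpr h0
  have hd : q.den ≠ 0 := q.den_nz
  rcases Nat.lt_or_ge (q.num.natAbs * q.den) 2 with h | h
  · exfalso
    have hna : q.num.natAbs = 1 ∧ q.den = 1 := by
      have : q.num.natAbs ≠ 0 := by omega
      constructor <;> nlinarith [Nat.one_le_iff_ne_zero.mpr hd,
        Nat.one_le_iff_ne_zero.mpr this]
    have hnum : q.num = 1 := by omega
    apply h1
    rw [← Rat.num_div_den q, hnum, hna.2]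
    norm_num
  · exact h

lemma measure_abs_lt {q : ℚ} (h : q < 0) : measureQ |q| < measureQ q := by
  have h1 : ¬ |q| < 0 := not_lt.mpr (abs_nonneg q)
  have hn : q.num ≠ 0 := by
    intro h'
    exact absurd (Rat.zero_iff_num_zero.mpr h') (ne_of_lt h)
  rw [measureQ, measureQ, abs_of_neg h, Rat.neg_num, Rat.neg_den, Int.natAbs_neg,
    if_neg (by rw [← abs_of_neg h]; exact h1), if_pos h]
  have hd : q.den ≠ 0 := q.den_nz
  have : q.num.natAbs ≠ 0 := Int.natAbs_ne_zero.mpr hn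
  omega

lemma measure_qExp_lt {q : ℚ} (h0 : 0 < q) (h1 : q ≠ 1) (i : ℕ) :
    measureQ ((qExp q i : ℤ) : ℚ) < measureQ q := by
  set e := qExp q i with he
  have hden : ((e : ℚ)).den = 1 := Rat.den_intCast e
  have hnum : ((e : ℚ)).num = e := Rat.num_intCast e
  have hnotneg : ¬ q < 0 := not_lt.mpr h0.le
  have hnd : 2 ≤ q.num.natAbs * q.den := two_le_nd h0 h1
  have hn : q.num.natAbs ≠ 0 := Int.natAbs_ne_zero.mpr (ne_of_gt (Rat.num_pos.mpr h0))
  have hd : q.den ≠ 0 := q.den_nz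
  have hbound : e.natAbs < q.num.natAbs * q.den := by
    rcases eq_or_ne e 0 with hez | hez
    · rw [hez]
      show (0:ℤ).natAbs < q.num.natAbs * q.den
      simp only [Int.natAbs_zero]
      exact lt_of_lt_of_le (by norm_num) hnd
    · set p := Nat.nth Nat.Prime i with hp
      have hpp : p.Prime := Nat.prime_nth_prime i
      have h2 : e.natAbs ≤ (q.num.natAbs * q.den).factorization p := by
        rw [Nat.factorization_mul hn hd]
        have : e = (q.num.natAbs.factorization p : ℤ) - (q.den.factorization p : ℤ) := rfl
        simp only [Finsupp.add_apply]
        omega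
      have h4 : p ^ e.natAbs ∣ q.num.natAbs * q.den :=
        dvd_trans (pow_dvd_pow p h2) (Nat.ordProj_dvd _ _)
      have h5 : p ^ e.natAbs ≤ q.num.natAbs * q.den := Nat.le_of_dvd (by omega) h4
      have h6 : 2 ^ e.natAbs ≤ p ^ e.natAbs := Nat.pow_le_pow_left hpp.two_le _
      have h7 := Nat.lt_two_pow_self (n := e.natAbs)
      omega
  rw [measureQ, measureQ, hnum, hden, if_neg hnotneg]
  split_ifs <;> omega

noncomputable def gQ (q : ℚ) : List Bool :=
  if h0 : q = 0 then [] else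
  if h1 : q = 1 then [true, false] else
  if hneg : q < 0 then gQ |q| ++ [true, false]
  else ((List.range (Nat.count Nat.Prime
          ((q.num.natAbs * q.den).factorization.support.sup id) + 1)).map
      (fun i => (true :: gQ ((qExp q i : ℤ) : ℚ)) ++ [false])).flatten
termination_by measureQ q
decreasing_by
  · exact measure_abs_lt hneg
  · exact measure_qExp_lt ((not_lt.mp hneg).lt_of_ne (Ne.symm h0)) h1 i

lemma gQ_zero : gQ 0 = [] := by rw [gQ]; simp

lemma gQ_one : gQ 1 = [true, false] := by rw [gQ]; norm_num

lemma gQ_neg {q : ℚ} (h : q < 0) : gQ q = gQ |q| ++ [true, false] := by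
  rw [gQ]
  rw [dif_neg (ne_of_lt h), dif_neg (by intro h'; rw [h'] at h; norm_num at h), dif_pos h]

lemma gQ_pos {q : ℚ} (h0 : 0 < q) (h1 : q ≠ 1) :
    gQ q = ((List.range (Nat.count Nat.Prime
          ((q.num.natAbs * q.den).factorization.support.sup id) + 1)).map
      (fun i => (true :: gQ ((qExp q i : ℤ) : ℚ)) ++ [false])).flatten := by
  rw [gQ]
  rw [dif_neg (ne_of_gt h0), dif_neg h1, dif_neg (not_lt.mpr h0.le)]

lemma gQ_spec : GammaQSpec gQ :=
  ⟨gQ_zero, gQ_one, fun _ h => gQ_neg h, fun _ h0 h1 => gQ_pos h0 h1⟩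

end RPF

namespace RPF

lemma suffix_eq_of_length {u v w : List Bool} (hu : u <:+ w) (hv : v <:+ w)
    (h : u.length = v.length) : u = v := by
  obtain ⟨x, hx⟩ := hu
  obtain ⟨y, hy⟩ := hv
  rw [← hx] at hy
  have hxy : x.length = y.length := by
    have := congrArg List.length hy
    simp at this
    omega
  exact List.append_inj_right hy.symm hxy

lemma isDyck_chunks_flatten : ∀ (l : List (List Bool)), (∀ d ∈ l, IsDyck d) →
    IsDyck ((l.map (fun d => (true :: d) ++ [false])).flatten) := by
  intro l
  induction l with
  | nil => intro _; simpa using isDyck_nil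
  | cons d t ih =>
    intro h
    simp only [List.map_cons, List.flatten_cons]
    exact isDyck_append (isDyck_chunk (h d (by simp))) (ih (fun x hx => h x (by simp [hx])))

lemma gQ_main : ∀ (n : ℕ) (q : ℚ), measureQ q < n →
    (IsDyck (gQ q) ∧ alphaQ (gQ q) = (q : ℝ) ∧ (q ≠ 0 → ∃ t, Valid (gQ q) t)) := by
  intro n
  induction n using Nat.strong_induction_on with
  | _ n ih =>
  intro q hq
  by_cases h0 : q = 0
  · subst h0
    rw [gQ_zero]
    exact ⟨isDyck_nil, by simp [alphaQ_nil], fun h => absurd rfl h⟩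
  by_cases h1 : q = 1
  · subst h1
    rw [gQ_one]
    have hv : Valid [true, false] ([true, false], 0, [[]]) := by
      refine ⟨by simp, Or.inl rfl, ?_, by simp, by simp [pairs]⟩
      intro d hd
      simp at hd
      rw [hd]
      exact isDyck_nil
    refine ⟨isDyck_chunk isDyck_nil, ?_, fun _ => ⟨_, hv⟩⟩
    rw [alphaQ_valid hv]
    simp [alphaQ_nil, Real.rpow_zero]
  by_cases hneg : q < 0
  · have habs : measureQ |q| < measureQ q := measure_abs_lt hneg
    obtain ⟨ihD, ihA, ihG⟩ := ih (measureQ q) hq |q| habs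
    obtain ⟨t, ht⟩ := ihG (abs_ne_zero.mpr h0)
    have hg : gQ q = gQ |q| ++ [true, false] := gQ_neg hneg
    obtain ⟨t1, t2, t3, t4, t5⟩ := ht
    have hv' : Valid (gQ q) (t.1, t.2.1 + 1, t.2.2) := by
      refine ⟨t1, t2, t3, t4, ?_⟩
      rw [hg, t5, pairs_succ, List.append_assoc]
    have e2 := alphaQ_valid (⟨t1, t2, t3, t4, t5⟩ : Valid (gQ |q|) t)
    refine ⟨?_, ?_, fun _ => ⟨_, hv'⟩⟩
    · rw [hg]
      exact isDyck_append ihD (isDyck_chunk isDyck_nil)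
    · rw [alphaQ_valid hv']
      have key : (-1 : ℝ) ^ (t.2.1 + 1) * (∏ i ∈ Finset.range t.2.2.length,
          ((Nat.nth Nat.Prime i : ℝ)) ^ (alphaQ (t.2.2.getD i [])))
          = -(alphaQ (gQ |q|)) := by
        rw [e2, pow_succ]
        ring
      rw [key, ihA, abs_of_neg hneg]
      push_cast
      ring
  · have hpos : 0 < q := (not_lt.mp hneg).lt_of_ne (Ne.symm h0)
    set S := (q.num.natAbs * q.den).factorization.support.sup id with hS
    set m := Nat.count Nat.Prime S + 1 with hm
    have hg : gQ q = ((List.range m).map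
        (fun i => (true :: gQ ((qExp q i : ℤ) : ℚ)) ++ [false])).flatten := gQ_pos hpos h1
    set l : List (List Bool) := (List.range m).map (fun i => gQ ((qExp q i : ℤ) : ℚ)) with hl
    have hflat : gQ q = (l.map (fun d => (true :: d) ++ [false])).flatten := by
      rw [hg, hl, List.map_map]
      rfl
    have ihall : ∀ i : ℕ, IsDyck (gQ ((qExp q i : ℤ) : ℚ))
        ∧ alphaQ (gQ ((qExp q i : ℤ) : ℚ)) = (((qExp q i : ℤ) : ℚ) : ℝ)
        ∧ (((qExp q i : ℤ) : ℚ) ≠ 0 → ∃ t, Valid (gQ ((qExp q i : ℤ) : ℚ)) t) :=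
      fun i => ih (measureQ q) hq _ (measure_qExp_lt hpos h1 i)
    have hdl : ∀ d ∈ l, IsDyck d := by
      intro d hd
      rw [hl] at hd
      simp only [List.mem_map, List.mem_range] at hd
      obtain ⟨i, _, rfl⟩ := hd
      exact (ihall i).1
    have hn : q.num.natAbs ≠ 0 := Int.natAbs_ne_zero.mpr (ne_of_gt (Rat.num_pos.mpr hpos))
    have hd : q.den ≠ 0 := q.den_nz
    have hnd : 2 ≤ q.num.natAbs * q.den := two_le_nd hpos h1
    have hsupne : (q.num.natAbs * q.den).factorization.support.Nonempty := by
      rw [Nat.support_factorization]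
      exact Nat.nonempty_primeFactors.mpr (by omega)
    have hSup : S ∈ (q.num.natAbs * q.den).factorization.support := by
      obtain ⟨p, hp, hps⟩ := Finset.exists_mem_eq_sup _ hsupne id
      rw [hS, hps]
      exact hp
    have hSprime : S.Prime :=
      Nat.prime_of_mem_primeFactors (by rwa [← Nat.support_factorization])
    have hSnth : Nat.nth Nat.Prime (Nat.count Nat.Prime S) = S := Nat.nth_count hSprime
    have hlast : qExp q (Nat.count Nat.Prime S) ≠ 0 := by
      rw [qExp, hSnth]
      have hsum : q.num.natAbs.factorization S + q.den.factorization S ≠ 0 := by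
        have := Finsupp.mem_support_iff.mp hSup
        rwa [Nat.factorization_mul hn hd, Finsupp.add_apply] at this
      have hnot : ¬ (q.num.natAbs.factorization S ≠ 0 ∧ q.den.factorization S ≠ 0) := by
        rintro ⟨ha, hb⟩
        have hdvd1 : S ∣ q.num.natAbs := Nat.dvd_of_factorization_pos ha
        have hdvd2 : S ∣ q.den := Nat.dvd_of_factorization_pos hb
        have : S ∣ 1 := q.reduced ▸ Nat.dvd_gcd hdvd1 hdvd2
        exact Nat.Prime.one_lt hSprime |>.ne' (Nat.eq_one_of_dvd_one this ▸ rfl)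
      omega
    have hlast_ne : gQ ((qExp q (Nat.count Nat.Prime S) : ℤ) : ℚ) ≠ [] := by
      obtain ⟨t, ht⟩ := (ihall (Nat.count Nat.Prime S)).2.2
        (by exact_mod_cast hlast)
      exact valid_w_ne_nil ht
    have hw'ne : gQ q ≠ [] := by
      rw [hg, hm]
      simp [List.range_succ]
    have hnosuf : ¬ ([true, false] <:+ gQ q) := by
      intro hsuf
      obtain ⟨d₀, hd₀⟩ := isDyck_ends_false (ihall (Nat.count Nat.Prime S)).1 hlast_ne
      have hff : [false, false] <:+ gQ q := by
        rw [hg]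
        have hrs : List.range m = List.range (Nat.count Nat.Prime S)
            ++ [Nat.count Nat.Prime S] := by rw [hm]; simp [List.range_succ]
        rw [hrs, List.map_append, List.flatten_append]
        simp only [List.map_cons, List.map_nil, List.flatten_cons, List.flatten_nil]
        rw [hd₀]
        exact ⟨(((List.range (Nat.count Nat.Prime S)).map
          (fun i => (true :: gQ ((qExp q i : ℤ) : ℚ)) ++ [false])).flatten ++ (true :: d₀)),
          by simp⟩
      have := suffix_eq_of_length hsuf hff rfl
      simp at this
    have hv : Valid (gQ q) (gQ q, 0, l) := ⟨hw'ne, Or.inr hnosuf, hdl, hflat, by simp [pairs]⟩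
    refine ⟨by rw [hflat]; exact isDyck_chunks_flatten l hdl, ?_, fun _ => ⟨_, hv⟩⟩
    rw [alphaQ_valid hv]
    simp only [pow_zero, one_mul]
    have hlen : l.length = m := by rw [hl]; simp
    rw [hlen, ← prod_primes_eq q hpos]
    apply Finset.prod_congr rfl
    intro i hi
    rw [Finset.mem_range] at hi
    have hget : l.getD i [] = gQ ((qExp q i : ℤ) : ℚ) := by
      rw [hl, List.getD_eq_getElem _ _ (by simpa using hi), List.getElem_map, List.getElem_range]
    rw [hget, (ihall i).2.1, Rat.cast_intCast, Real.rpow_intCast]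

end RPF

/-- For every rational `q`, the (finite) word `γ_ℚ q` is a Dyck word and
`α_ℚ (γ_ℚ q) = q`: every rational number is represented by a finite Dyck word. -/
theorem gammaQ_isDyck_and_alphaQ_gammaQ :
    ∃ (g : ℚ → List Bool) (a : List Bool → ℝ),
      GammaQSpec g ∧ AlphaQSpec a ∧
      ∀ q : ℚ, IsDyck (g q) ∧ a (g q) = (q : ℝ) := by
  refine ⟨RPF.gQ, RPF.alphaQ, RPF.gQ_spec, RPF.alphaQ_spec, fun q => ?_⟩
  obtain ⟨h1, h2, _⟩ := RPF.gQ_main (RPF.measureQ q + 1) q (by omega)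
  exact ⟨h1, h2⟩
end
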